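/- arXiv:math/9903089 — 4 statements merged into one kernel-verified Lean document; each statement's English description precedes it below -/
import Mathlib

section
/- Suppose x ∈ ℝⁿ is a metric regular point of d, i.e. for every u ∈ ℝⁿ and every τ ∈ ℝ one has ρ̲(x, u) = ρ̄(x, u) and ρ̄(x, τ·u) = |τ| · ρ̄(x, u). Then for all v, w ∈ ℝⁿ: limsup_{t→0⁺} sup{ d(y + t·v, y + t·w)/t : y ∈ B̄(x, t) } = ρ̄(x, w − v). -/
open Filter Metric Set

/-- Lower derivate of a distance function `d` on `ℝⁿ` at `x` in direction `v`:
`liminf_{t→0⁺} inf { d(y, y + t•v)/t : y ∈ B̄(x,t) }`. -/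
noncomputable def lowerDerivate {n : ℕ}
    (d : EuclideanSpace ℝ (Fin n) → EuclideanSpace ℝ (Fin n) → ℝ)
    (x v : EuclideanSpace ℝ (Fin n)) : ℝ :=
  Filter.liminf
    (fun t : ℝ => sInf ((fun y => d y (y + t • v) / t) '' Metric.closedBall x t))
    (nhdsWithin 0 (Set.Ioi 0))

/-- Upper derivate of a distance function `d` on `ℝⁿ` at `x` in direction `v`:
`limsup_{t→0⁺} sup { d(y, y + t•v)/t : y ∈ B̄(x,t) }`. -/
noncomputable def upperDerivate {n : ℕ}
    (d : EuclideanSpace ℝ (Fin n) → EuclideanSpace ℝ (Fin n) → ℝ)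
    (x v : EuclideanSpace ℝ (Fin n)) : ℝ :=
  Filter.limsup
    (fun t : ℝ => sSup ((fun y => d y (y + t • v) / t) '' Metric.closedBall x t))
    (nhdsWithin 0 (Set.Ioi 0))

/- ---------- auxiliary lemmas ---------- -/

section AuxFilter

lemma aux_limsup_const_mul {ι : Type*} {F : Filter ι} [F.NeBot] {u : ι → ℝ} {c : ℝ} (hc : 0 ≤ c)
    (h1 : F.IsBoundedUnder (· ≤ ·) u) (h2 : F.IsCoboundedUnder (· ≤ ·) u) :
    Filter.limsup (fun i => c * u i) F = c * Filter.limsup u F := by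
  have := Monotone.map_limsup_of_continuousAt (F := F) (f := fun r : ℝ => c * r)
    (fun _ _ h => mul_le_mul_of_nonneg_left h hc) u
    ((continuous_const.mul continuous_id).continuousAt) h1 h2
  simpa [Function.comp_def] using this.symm

lemma aux_liminf_const_mul {ι : Type*} {F : Filter ι} [F.NeBot] {u : ι → ℝ} {c : ℝ} (hc : 0 ≤ c)
    (h1 : F.IsCoboundedUnder (· ≥ ·) u) (h2 : F.IsBoundedUnder (· ≥ ·) u) :
    Filter.liminf (fun i => c * u i) F = c * Filter.liminf u F := by
  have := Monotone.map_liminf_of_continuousAt (F := F) (f := fun r : ℝ => c * r)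
    (fun _ _ h => mul_le_mul_of_nonneg_left h hc) u
    ((continuous_const.mul continuous_id).continuousAt) h1 h2
  simpa [Function.comp_def] using this.symm

lemma aux_limsup_comp_map {α β : Type*} [ConditionallyCompleteLattice α]
    (g : β → α) (m : β → β) (F : Filter β) :
    Filter.limsup g (Filter.map m F) = Filter.limsup (fun x => g (m x)) F := by
  simp only [Filter.limsup, Filter.map_map]; rfl

lemma aux_liminf_comp_map {α β : Type*} [ConditionallyCompleteLattice α]
    (g : β → α) (m : β → β) (F : Filter β) :
    Filter.liminf g (Filter.map m F) = Filter.liminf (fun x => g (m x)) F := by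
  simp only [Filter.liminf, Filter.map_map]; rfl

lemma aux_map_mul {c : ℝ} (hc : 0 < c) :
    Filter.map (fun t : ℝ => c * t) (nhdsWithin 0 (Set.Ioi 0)) = nhdsWithin 0 (Set.Ioi 0) := by
  have key : ∀ b : ℝ, 0 < b →
      Filter.map (fun t : ℝ => b * t) (nhdsWithin 0 (Set.Ioi 0)) ≤ nhdsWithin 0 (Set.Ioi 0) := by
    intro b hb
    rw [Filter.map_le_iff_le_comap, ← Filter.tendsto_iff_comap]
    apply tendsto_nhdsWithin_of_tendsto_nhds_of_eventually_within
    · simpa using ((continuous_mul_left b).tendsto (0:ℝ)).mono_left nhdsWithin_le_nhds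
    · exact eventually_mem_nhdsWithin.mono fun t ht => mul_pos hb ht
  refine le_antisymm (key c hc) ?_
  have h2 := key c⁻¹ (inv_pos.2 hc)
  calc nhdsWithin (0:ℝ) (Set.Ioi 0)
      = Filter.map (fun t : ℝ => c * t)
          (Filter.map (fun t : ℝ => c⁻¹ * t) (nhdsWithin 0 (Set.Ioi 0))) := by
        rw [Filter.map_map]
        have : ((fun t : ℝ => c * t) ∘ fun t : ℝ => c⁻¹ * t) = id := by
          funext t; simp [← mul_assoc, mul_inv_cancel₀ hc.ne']
        rw [this, Filter.map_id]
    _ ≤ Filter.map (fun t : ℝ => c * t) (nhdsWithin 0 (Set.Ioi 0)) := Filter.map_mono h2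

end AuxFilter

section AuxSets

variable {n : ℕ} {L : ℝ} {d : EuclideanSpace ℝ (Fin n) → EuclideanSpace ℝ (Fin n) → ℝ}

/-- Every element of a derivate set lies in `[0, L‖u‖]`. -/
lemma aux_mem_Icc (hd0 : ∀ a b, 0 ≤ d a b) (hLip : ∀ a b, d a b ≤ L * ‖a - b‖)
    (u : EuclideanSpace ℝ (Fin n)) {t : ℝ} (ht : 0 < t) (S : Set (EuclideanSpace ℝ (Fin n))) :
    ∀ a ∈ (fun z => d z (z + t • u) / t) '' S, a ∈ Set.Icc 0 (L * ‖u‖) := by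
  rintro a ⟨z, -, rfl⟩
  constructor
  · exact div_nonneg (hd0 _ _) ht.le
  · have hnorm : ‖z - (z + t • u)‖ = t * ‖u‖ := by
      have : z - (z + t • u) = -(t • u) := by abel
      rw [this, norm_neg, norm_smul, Real.norm_eq_abs, abs_of_pos ht]
    have h := hLip z (z + t • u)
    rw [hnorm] at h
    calc d z (z + t • u) / t ≤ L * (t * ‖u‖) / t := by gcongr
      _ = L * ‖u‖ := by field_simp

lemma aux_nonempty (f : EuclideanSpace ℝ (Fin n) → ℝ) (x : EuclideanSpace ℝ (Fin n))
    {r : ℝ} (hr : 0 ≤ r) : (f '' Metric.closedBall x r).Nonempty :=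
  ⟨f x, Set.mem_image_of_mem f (Metric.mem_closedBall_self hr)⟩

end AuxSets

section AuxRescale

variable {n : ℕ} {L : ℝ} {d : EuclideanSpace ℝ (Fin n) → EuclideanSpace ℝ (Fin n) → ℝ}
  {x : EuclideanSpace ℝ (Fin n)}

/-- sSup of a derivate set over the ball of radius `c*t` rescales. -/
lemma aux_rescale_sup (hd0 : ∀ a b, 0 ≤ d a b) (hLip : ∀ a b, d a b ≤ L * ‖a - b‖)
    (u : EuclideanSpace ℝ (Fin n)) {c : ℝ} (hc : 0 < c) :
    Filter.limsup
        (fun t : ℝ => sSup ((fun z => d z (z + t • u) / t) '' Metric.closedBall x (c * t)))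
        (nhdsWithin 0 (Set.Ioi 0))
      = c * upperDerivate d x (c⁻¹ • u) := by
  set u' : EuclideanSpace ℝ (Fin n) := c⁻¹ • u with hu'
  set g : ℝ → ℝ :=
    fun s => sSup ((fun z => d z (z + s • u') / s) '' Metric.closedBall x s) with hg
  -- eventual bounds on g
  have hg_ub : ∀ s : ℝ, 0 < s → g s ≤ L * ‖u'‖ := fun s hs =>
    csSup_le (aux_nonempty _ x hs.le)
      (fun a ha => ((aux_mem_Icc hd0 hLip u' hs _) a ha).2)
  have hg_lb : ∀ s : ℝ, 0 < s → 0 ≤ g s := fun s hs =>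
    le_trans ((aux_mem_Icc hd0 hLip u' hs _ _
        (Set.mem_image_of_mem _ (Metric.mem_closedBall_self hs.le))).1)
      (le_csSup ⟨L * ‖u'‖, fun a ha => ((aux_mem_Icc hd0 hLip u' hs _) a ha).2⟩
        (Set.mem_image_of_mem _ (Metric.mem_closedBall_self hs.le)))
  have hbddU : (nhdsWithin (0:ℝ) (Set.Ioi 0)).IsBoundedUnder (· ≤ ·) g :=
    ⟨L * ‖u'‖, eventually_mem_nhdsWithin.mono fun s hs => hg_ub s hs⟩
  have hbddL : (nhdsWithin (0:ℝ) (Set.Ioi 0)).IsBoundedUnder (· ≥ ·) g :=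
    ⟨0, eventually_mem_nhdsWithin.mono fun s hs => hg_lb s hs⟩
  -- pointwise identity
  have hpt : ∀ᶠ t in nhdsWithin (0:ℝ) (Set.Ioi 0),
      sSup ((fun z => d z (z + t • u) / t) '' Metric.closedBall x (c * t))
        = c * g (c * t) := by
    refine eventually_mem_nhdsWithin.mono fun t ht => ?_
    have htpos : (0:ℝ) < t := ht
    have hst : 0 < c * t := mul_pos hc htpos
    have hsu : (c * t) • u' = t • u := by
      rw [hu', smul_smul]; congr 1; field_simp
    have hfun : (fun z => d z (z + t • u) / t)
        = fun z => c * (d z (z + (c * t) • u') / (c * t)) := by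
      funext z
      rw [hsu]
      field_simp
    rw [hfun]
    have himg : (fun z => c * (d z (z + (c * t) • u') / (c * t))) '' Metric.closedBall x (c * t)
        = (fun r => c * r) ''
            ((fun z => d z (z + (c * t) • u') / (c * t)) '' Metric.closedBall x (c * t)) := by
      rw [Set.image_image]
    rw [himg]
    exact (Monotone.map_csSup_of_continuousAt
      ((continuous_const.mul continuous_id).continuousAt)
      (fun _ _ h => mul_le_mul_of_nonneg_left h hc.le)
      (aux_nonempty _ x hst.le)
      ⟨L * ‖u'‖, fun a ha => ((aux_mem_Icc hd0 hLip u' hst _) a ha).2⟩).symm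
  rw [Filter.limsup_congr hpt]
  -- boundedness of fun t => g (c*t)
  have hbddU' : (nhdsWithin (0:ℝ) (Set.Ioi 0)).IsBoundedUnder (· ≤ ·) (fun t => g (c * t)) :=
    ⟨L * ‖u'‖, eventually_mem_nhdsWithin.mono fun t ht => hg_ub _ (mul_pos hc ht)⟩
  have hbddL' : (nhdsWithin (0:ℝ) (Set.Ioi 0)).IsBoundedUnder (· ≥ ·) (fun t => g (c * t)) :=
    ⟨0, eventually_mem_nhdsWithin.mono fun t ht => hg_lb _ (mul_pos hc ht)⟩
  rw [aux_limsup_const_mul hc.le hbddU' hbddL'.isCoboundedUnder_le]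
  congr 1
  have : Filter.limsup (fun t => g (c * t)) (nhdsWithin (0:ℝ) (Set.Ioi 0))
      = Filter.limsup g (nhdsWithin (0:ℝ) (Set.Ioi 0)) := by
    conv_rhs => rw [← aux_map_mul hc]
    rw [aux_limsup_comp_map]
  rw [this]
  rfl

/-- sInf of a derivate set over the ball of radius `c*t` rescales. -/
lemma aux_rescale_inf (hd0 : ∀ a b, 0 ≤ d a b) (hLip : ∀ a b, d a b ≤ L * ‖a - b‖)
    (u : EuclideanSpace ℝ (Fin n)) {c : ℝ} (hc : 0 < c) :
    Filter.liminf
        (fun t : ℝ => sInf ((fun z => d z (z + t • u) / t) '' Metric.closedBall x (c * t)))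
        (nhdsWithin 0 (Set.Ioi 0))
      = c * lowerDerivate d x (c⁻¹ • u) := by
  set u' : EuclideanSpace ℝ (Fin n) := c⁻¹ • u with hu'
  set g : ℝ → ℝ :=
    fun s => sInf ((fun z => d z (z + s • u') / s) '' Metric.closedBall x s) with hg
  have hg_ub : ∀ s : ℝ, 0 < s → g s ≤ L * ‖u'‖ := fun s hs =>
    le_trans
      (csInf_le ⟨0, fun a ha => ((aux_mem_Icc hd0 hLip u' hs _) a ha).1⟩
        (Set.mem_image_of_mem _ (Metric.mem_closedBall_self hs.le)))
      ((aux_mem_Icc hd0 hLip u' hs _ _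
        (Set.mem_image_of_mem _ (Metric.mem_closedBall_self hs.le))).2)
  have hg_lb : ∀ s : ℝ, 0 < s → 0 ≤ g s := fun s hs =>
    le_csInf (aux_nonempty _ x hs.le) (fun a ha => ((aux_mem_Icc hd0 hLip u' hs _) a ha).1)
  have hpt : ∀ᶠ t in nhdsWithin (0:ℝ) (Set.Ioi 0),
      sInf ((fun z => d z (z + t • u) / t) '' Metric.closedBall x (c * t))
        = c * g (c * t) := by
    refine eventually_mem_nhdsWithin.mono fun t ht => ?_
    have htpos : (0:ℝ) < t := ht
    have hst : 0 < c * t := mul_pos hc htpos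
    have hsu : (c * t) • u' = t • u := by
      rw [hu', smul_smul]; congr 1; field_simp
    have hfun : (fun z => d z (z + t • u) / t)
        = fun z => c * (d z (z + (c * t) • u') / (c * t)) := by
      funext z
      rw [hsu]
      field_simp
    rw [hfun]
    have himg : (fun z => c * (d z (z + (c * t) • u') / (c * t))) '' Metric.closedBall x (c * t)
        = (fun r => c * r) ''
            ((fun z => d z (z + (c * t) • u') / (c * t)) '' Metric.closedBall x (c * t)) := by
      rw [Set.image_image]
    rw [himg]
    exact (Monotone.map_csInf_of_continuousAt
      ((continuous_const.mul continuous_id).continuousAt)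
      (fun _ _ h => mul_le_mul_of_nonneg_left h hc.le)
      (aux_nonempty _ x hst.le)
      ⟨0, fun a ha => ((aux_mem_Icc hd0 hLip u' hst _) a ha).1⟩).symm
  rw [Filter.liminf_congr hpt]
  have hbddU' : (nhdsWithin (0:ℝ) (Set.Ioi 0)).IsBoundedUnder (· ≤ ·) (fun t => g (c * t)) :=
    ⟨L * ‖u'‖, eventually_mem_nhdsWithin.mono fun t ht => hg_ub _ (mul_pos hc ht)⟩
  have hbddL' : (nhdsWithin (0:ℝ) (Set.Ioi 0)).IsBoundedUnder (· ≥ ·) (fun t => g (c * t)) :=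
    ⟨0, eventually_mem_nhdsWithin.mono fun t ht => hg_lb _ (mul_pos hc ht)⟩
  rw [aux_liminf_const_mul hc.le hbddU'.isCoboundedUnder_ge hbddL']
  congr 1
  have : Filter.liminf (fun t => g (c * t)) (nhdsWithin (0:ℝ) (Set.Ioi 0))
      = Filter.liminf g (nhdsWithin (0:ℝ) (Set.Ioi 0)) := by
    conv_rhs => rw [← aux_map_mul hc]
    rw [aux_liminf_comp_map]
  rw [this]
  rfl

end AuxRescale

/-- If `x` is a metric regular point of the pseudometric `d`
(lower and upper derivates agree at `x` and are absolutely homogeneous there),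
then for all `v, w ∈ ℝⁿ`,
`limsup_{t→0⁺} sup { d(y + t•v, y + t•w)/t : y ∈ B̄(x,t) } = ρ̄(x, w − v)`. -/
theorem limsup_eq_upperDerivate_of_metric_regular
    {n : ℕ} (L : ℝ) (hL : 0 < L)
    (d : EuclideanSpace ℝ (Fin n) → EuclideanSpace ℝ (Fin n) → ℝ)
    (hsymm : ∀ a b, d a b = d b a)
    (hdiag : ∀ a, d a a = 0)
    (htri : ∀ a b c, d a c ≤ d a b + d b c)
    (hLip : ∀ a b, d a b ≤ L * ‖a - b‖)
    (x : EuclideanSpace ℝ (Fin n))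
    (hreg : ∀ (u : EuclideanSpace ℝ (Fin n)) (τ : ℝ),
      lowerDerivate d x u = upperDerivate d x u ∧
        upperDerivate d x (τ • u) = |τ| * upperDerivate d x u) :
    ∀ v w : EuclideanSpace ℝ (Fin n),
      Filter.limsup
          (fun t : ℝ =>
            sSup ((fun y => d (y + t • v) (y + t • w) / t) '' Metric.closedBall x t))
          (nhdsWithin 0 (Set.Ioi 0)) = upperDerivate d x (w - v) := by
  intro v w
  have hd0 : ∀ a b, 0 ≤ d a b := by
    intro a b
    have h := htri a b a
    rw [hdiag a, hsymm b a] at h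
    linarith
  set u : EuclideanSpace ℝ (Fin n) := w - v with hu
  set c : ℝ := 1 + ‖v‖ with hcdef
  have hc : 0 < c := by positivity
  have hcu : c • (c⁻¹ • u) = u := by
    rw [smul_smul, mul_inv_cancel₀ hc.ne', one_smul]
  -- the three relevant functions of t
  set A : ℝ → ℝ := fun t =>
    sSup ((fun y => d (y + t • v) (y + t • w) / t) '' Metric.closedBall x t) with hA
  set G : ℝ → ℝ := fun t =>
    sSup ((fun z => d z (z + t • u) / t) '' Metric.closedBall x (c * t)) with hG
  set H : ℝ → ℝ := fun t =>
    sInf ((fun z => d z (z + t • u) / t) '' Metric.closedBall x (c * t)) with hH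
  -- rewrite A's image set
  have hAset : ∀ t : ℝ, 0 < t →
      (fun y => d (y + t • v) (y + t • w) / t) '' Metric.closedBall x t
        = (fun z => d z (z + t • u) / t) '' ((fun y => y + t • v) '' Metric.closedBall x t) := by
    intro t ht
    rw [Set.image_image]
    apply Set.image_congr
    intro y _
    congr 2
    rw [hu, smul_sub]
    abel
  have hsub : ∀ t : ℝ, 0 < t →
      (fun y => y + t • v) '' Metric.closedBall x t ⊆ Metric.closedBall x (c * t) := by
    intro t ht
    rintro _ ⟨y, hy, rfl⟩
    rw [Metric.mem_closedBall] at hy ⊢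
    have : dist (y + t • v) x ≤ dist y x + ‖t • v‖ := by
      rw [dist_eq_norm, dist_eq_norm]
      calc ‖y + t • v - x‖ = ‖(y - x) + t • v‖ := by congr 1; abel
        _ ≤ ‖y - x‖ + ‖t • v‖ := norm_add_le _ _
    have hnv : ‖t • v‖ = t * ‖v‖ := by
      rw [norm_smul, Real.norm_eq_abs, abs_of_pos ht]
    calc dist (y + t • v) x ≤ t + t * ‖v‖ := by rw [hnv] at this; linarith
      _ = c * t := by rw [hcdef]; ring
  -- bounds on A, G, H
  have hGub : ∀ t : ℝ, 0 < t → G t ≤ L * ‖u‖ := fun t ht =>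
    csSup_le (aux_nonempty _ x (mul_pos hc ht).le)
      (fun a ha => ((aux_mem_Icc hd0 hLip u ht _) a ha).2)
  have hAmem : ∀ t : ℝ, 0 < t → ∀ a ∈
      (fun y => d (y + t • v) (y + t • w) / t) '' Metric.closedBall x t,
      a ∈ Set.Icc 0 (L * ‖u‖) := by
    intro t ht a ha
    rw [hAset t ht] at ha
    exact aux_mem_Icc hd0 hLip u ht _ a ha
  have hAne : ∀ t : ℝ, 0 < t →
      ((fun y => d (y + t • v) (y + t • w) / t) '' Metric.closedBall x t).Nonempty :=
    fun t ht => aux_nonempty _ x ht.le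
  have hAub : ∀ t : ℝ, 0 < t → A t ≤ L * ‖u‖ := fun t ht =>
    csSup_le (hAne t ht) (fun a ha => (hAmem t ht a ha).2)
  have hAlb : ∀ t : ℝ, 0 < t → 0 ≤ A t := by
    intro t ht
    obtain ⟨a, ha⟩ := hAne t ht
    exact le_trans (hAmem t ht a ha).1
      (le_csSup ⟨L * ‖u‖, fun b hb => (hAmem t ht b hb).2⟩ ha)
  have hHub : ∀ t : ℝ, 0 < t → H t ≤ L * ‖u‖ := by
    intro t ht
    refine le_trans (csInf_le ⟨0, fun a ha => ((aux_mem_Icc hd0 hLip u ht _) a ha).1⟩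
      (Set.mem_image_of_mem _ (Metric.mem_closedBall_self (mul_pos hc ht).le))) ?_
    exact ((aux_mem_Icc hd0 hLip u ht _) _
      (Set.mem_image_of_mem _ (Metric.mem_closedBall_self (mul_pos hc ht).le))).2
  have hHbddL : (nhdsWithin (0:ℝ) (Set.Ioi 0)).IsBoundedUnder (· ≥ ·) H :=
    ⟨0, eventually_mem_nhdsWithin.mono fun t ht =>
      le_csInf (aux_nonempty _ x (mul_pos hc ht).le)
        (fun a ha => ((aux_mem_Icc hd0 hLip u ht _) a ha).1)⟩
  -- pointwise comparisons
  have hAG : ∀ t : ℝ, 0 < t → A t ≤ G t := by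
    intro t ht
    rw [hA, hG]
    simp only
    rw [hAset t ht]
    apply csSup_le_csSup
    · exact ⟨L * ‖u‖, fun a ha => ((aux_mem_Icc hd0 hLip u ht _) a ha).2⟩
    · exact ((Metric.nonempty_closedBall.2 ht.le).image _).image _
    · exact Set.image_mono (hsub t ht)
  have hHA : ∀ t : ℝ, 0 < t → H t ≤ A t := by
    intro t ht
    -- the element corresponding to y = x
    have hmemA : d (x + t • v) (x + t • w) / t ∈
        (fun y => d (y + t • v) (y + t • w) / t) '' Metric.closedBall x t :=
      Set.mem_image_of_mem _ (Metric.mem_closedBall_self ht.le)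
    have heq : d (x + t • v) (x + t • w) / t
        = d (x + t • v) ((x + t • v) + t • u) / t := by
      congr 2
      rw [hu, smul_sub]; abel
    have hmemG : (x + t • v) ∈ Metric.closedBall x (c * t) :=
      hsub t ht (Set.mem_image_of_mem _ (Metric.mem_closedBall_self ht.le))
    have h1 : H t ≤ d (x + t • v) ((x + t • v) + t • u) / t :=
      csInf_le ⟨0, fun a ha => ((aux_mem_Icc hd0 hLip u ht _) a ha).1⟩
        (Set.mem_image_of_mem _ hmemG)
    have h2 : d (x + t • v) (x + t • w) / t ≤ A t :=
      le_csSup ⟨L * ‖u‖, fun a ha => (hAmem t ht a ha).2⟩ hmemA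
    rw [heq] at h2
    exact le_trans h1 h2
  -- values of the rescaled limits
  have hreg1 := (hreg (c⁻¹ • u) c).2
  rw [hcu, abs_of_pos hc] at hreg1
  have hreg2 := (hreg (c⁻¹ • u) 1).1
  have hGlim : Filter.limsup G (nhdsWithin (0:ℝ) (Set.Ioi 0)) = upperDerivate d x u := by
    rw [hG]
    rw [aux_rescale_sup hd0 hLip u hc]
    exact hreg1.symm
  have hHlim : Filter.liminf H (nhdsWithin (0:ℝ) (Set.Ioi 0)) = upperDerivate d x u := by
    rw [hH]
    rw [aux_rescale_inf hd0 hLip u hc, hreg2]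
    exact hreg1.symm
  -- boundedness of A
  have hAbddU : (nhdsWithin (0:ℝ) (Set.Ioi 0)).IsBoundedUnder (· ≤ ·) A :=
    ⟨L * ‖u‖, eventually_mem_nhdsWithin.mono fun t ht => hAub t ht⟩
  have hAbddL : (nhdsWithin (0:ℝ) (Set.Ioi 0)).IsBoundedUnder (· ≥ ·) A :=
    ⟨0, eventually_mem_nhdsWithin.mono fun t ht => hAlb t ht⟩
  have hGbddU : (nhdsWithin (0:ℝ) (Set.Ioi 0)).IsBoundedUnder (· ≤ ·) G :=
    ⟨L * ‖u‖, eventually_mem_nhdsWithin.mono fun t ht => hGub t ht⟩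
  have hHbddU : (nhdsWithin (0:ℝ) (Set.Ioi 0)).IsBoundedUnder (· ≤ ·) H :=
    ⟨L * ‖u‖, eventually_mem_nhdsWithin.mono fun t ht => hHub t ht⟩
  refine le_antisymm ?_ ?_
  · calc Filter.limsup A (nhdsWithin (0:ℝ) (Set.Ioi 0))
        ≤ Filter.limsup G (nhdsWithin (0:ℝ) (Set.Ioi 0)) :=
          Filter.limsup_le_limsup (eventually_mem_nhdsWithin.mono fun t ht => hAG t ht)
            hAbddL.isCoboundedUnder_le hGbddU
      _ = upperDerivate d x u := hGlim
  · calc upperDerivate d x u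
        = Filter.liminf H (nhdsWithin (0:ℝ) (Set.Ioi 0)) := hHlim.symm
      _ ≤ Filter.liminf A (nhdsWithin (0:ℝ) (Set.Ioi 0)) :=
          Filter.liminf_le_liminf (eventually_mem_nhdsWithin.mono fun t ht => hHA t ht)
            hHbddL hAbddU.isCoboundedUnder_ge
      _ ≤ Filter.limsup A (nhdsWithin (0:ℝ) (Set.Ioi 0)) :=
          Filter.liminf_le_limsup hAbddU hAbddL
end

section
/- The lower derivate ρ̲ : ℝⁿ × ℝⁿ → ℝ and the upper derivate ρ̄ : ℝⁿ × ℝⁿ → ℝ are Borel measurable functions. -/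
open Filter Metric Set

namespace DerivAux

variable {n : ℕ}

def T (n : ℕ) (k : ℕ) : Set (ℝ × EuclideanSpace ℝ (Fin n)) :=
  {q | q.1 ∈ Set.Ioc (0:ℝ) (1/(k+1)) ∧ ‖q.2‖ ≤ q.1}

noncomputable def G (d : EuclideanSpace ℝ (Fin n) → EuclideanSpace ℝ (Fin n) → ℝ)
    (q : ℝ × EuclideanSpace ℝ (Fin n))
    (p : EuclideanSpace ℝ (Fin n) × EuclideanSpace ℝ (Fin n)) : ℝ :=
  d (p.1 + q.2) (p.1 + q.2 + q.1 • p.2) / q.1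

variable {L : ℝ} {d : EuclideanSpace ℝ (Fin n) → EuclideanSpace ℝ (Fin n) → ℝ}

lemma d_nonneg (hsymm : ∀ a b, d a b = d b a) (hdiag : ∀ a, d a a = 0)
    (htri : ∀ a b c, d a c ≤ d a b + d b c) (a b : EuclideanSpace ℝ (Fin n)) :
    0 ≤ d a b := by
  have h := htri a b a
  rw [hdiag a, hsymm b a] at h
  linarith

lemma d_lip (hsymm : ∀ a b, d a b = d b a)
    (htri : ∀ a b c, d a c ≤ d a b + d b c)
    (hLip : ∀ a b, d a b ≤ L * ‖a - b‖) (a b a' b' : EuclideanSpace ℝ (Fin n)) :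
    d a b - d a' b' ≤ L * ‖a - a'‖ + L * ‖b - b'‖ := by
  have h1 := htri a a' b
  have h2 := htri a' b' b
  have h3 := hLip a a'
  have h4 := hLip b' b
  rw [norm_sub_rev b' b] at h4
  linarith

lemma G_cont (hL : 0 < L) (hsymm : ∀ a b, d a b = d b a)
    (htri : ∀ a b c, d a c ≤ d a b + d b c)
    (hLip : ∀ a b, d a b ≤ L * ‖a - b‖)
    (q : ℝ × EuclideanSpace ℝ (Fin n)) :
    Continuous (G d q) := by
  have hD : LipschitzWith (Real.toNNReal (2 * L))
      (fun r : EuclideanSpace ℝ (Fin n) × EuclideanSpace ℝ (Fin n) => d r.1 r.2) := by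
    apply LipschitzWith.of_dist_le_mul
    intro r r'
    rw [Real.coe_toNNReal _ (by linarith)]
    rw [Real.dist_eq, abs_sub_le_iff]
    have e1 : ‖r.1 - r'.1‖ ≤ dist r r' := by
      rw [← dist_eq_norm]; exact le_trans (le_max_left _ _) (le_of_eq (Prod.dist_eq).symm)
    have e2 : ‖r.2 - r'.2‖ ≤ dist r r' := by
      rw [← dist_eq_norm]; exact le_trans (le_max_right _ _) (le_of_eq (Prod.dist_eq).symm)
    have e1' : ‖r'.1 - r.1‖ ≤ dist r r' := by rw [norm_sub_rev]; exact e1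
    have e2' : ‖r'.2 - r.2‖ ≤ dist r r' := by rw [norm_sub_rev]; exact e2
    constructor
    · have := d_lip hsymm htri hLip r.1 r.2 r'.1 r'.2
      nlinarith
    · have := d_lip hsymm htri hLip r'.1 r'.2 r.1 r.2
      nlinarith
  have hm : Continuous (fun p : EuclideanSpace ℝ (Fin n) × EuclideanSpace ℝ (Fin n) =>
      ((p.1 + q.2, p.1 + q.2 + q.1 • p.2) :
        EuclideanSpace ℝ (Fin n) × EuclideanSpace ℝ (Fin n))) := by
    fun_prop
  exact (hD.continuous.comp hm).div_const q.1


lemma kpos (k : ℕ) : (0:ℝ) < 1/(k+1) := by positivity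

lemma T_mem (k : ℕ) : ((1:ℝ)/(k+1), (0 : EuclideanSpace ℝ (Fin n))) ∈ T n k := by
  refine ⟨⟨kpos k, le_rfl⟩, ?_⟩
  simpa using (kpos k).le

lemma T_subset {k m : ℕ} (h : k ≤ m) : T n m ⊆ T n k := by
  rintro q ⟨⟨h1, h2⟩, h3⟩
  refine ⟨⟨h1, h2.trans ?_⟩, h3⟩
  apply one_div_le_one_div_of_le (by positivity)
  have : (k:ℝ) ≤ m := Nat.cast_le.mpr h
  linarith

lemma G_nonneg (hsymm : ∀ a b, d a b = d b a) (hdiag : ∀ a, d a a = 0)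
    (htri : ∀ a b c, d a c ≤ d a b + d b c)
    {q : ℝ × EuclideanSpace ℝ (Fin n)} (hq : 0 < q.1) (p) :
    0 ≤ G d q p :=
  div_nonneg (d_nonneg hsymm hdiag htri _ _) hq.le

lemma G_le (hLip : ∀ a b, d a b ≤ L * ‖a - b‖)
    {q : ℝ × EuclideanSpace ℝ (Fin n)} (hq : 0 < q.1) (p) :
    G d q p ≤ L * ‖p.2‖ := by
  unfold G
  rw [div_le_iff₀ hq]
  calc d (p.1 + q.2) (p.1 + q.2 + q.1 • p.2)
      ≤ L * ‖(p.1 + q.2) - (p.1 + q.2 + q.1 • p.2)‖ := hLip _ _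
    _ = L * (q.1 * ‖p.2‖) := by
        rw [show (p.1 + q.2) - (p.1 + q.2 + q.1 • p.2) = -(q.1 • p.2) by abel]
        rw [norm_neg, norm_smul, Real.norm_eq_abs, abs_of_pos hq]
    _ = L * ‖p.2‖ * q.1 := by ring

/-- The set of difference-quotient values over the parameter set `T n k`. -/
def V (d : EuclideanSpace ℝ (Fin n) → EuclideanSpace ℝ (Fin n) → ℝ) (k : ℕ)
    (p : EuclideanSpace ℝ (Fin n) × EuclideanSpace ℝ (Fin n)) : Set ℝ :=
  (fun q => G d q p) '' T n k

lemma V_nonempty (k : ℕ) (p) : (V d k p).Nonempty :=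
  ⟨_, ⟨_, T_mem k, rfl⟩⟩

lemma V_bddBelow (hsymm : ∀ a b, d a b = d b a) (hdiag : ∀ a, d a a = 0)
    (htri : ∀ a b c, d a c ≤ d a b + d b c) (k : ℕ) (p) :
    BddBelow (V d k p) := by
  refine ⟨0, ?_⟩
  rintro _ ⟨q, hq, rfl⟩
  exact G_nonneg hsymm hdiag htri hq.1.1 p

lemma V_bddAbove (hLip : ∀ a b, d a b ≤ L * ‖a - b‖) (k : ℕ) (p) :
    BddAbove (V d k p) := by
  refine ⟨L * ‖p.2‖, ?_⟩
  rintro _ ⟨q, hq, rfl⟩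
  exact G_le hLip hq.1.1 p

-- semicontinuity & monotonicity (appended to aux2 content in final file)
lemma h_usc (hL : 0 < L) (hsymm : ∀ a b, d a b = d b a) (hdiag : ∀ a, d a a = 0)
    (htri : ∀ a b c, d a c ≤ d a b + d b c)
    (hLip : ∀ a b, d a b ≤ L * ‖a - b‖) (k : ℕ) :
    UpperSemicontinuous (fun p => sInf (V d k p)) := by
  intro p c hc
  obtain ⟨_, ⟨q, hq, rfl⟩, hlt⟩ :=
    (csInf_lt_iff (V_bddBelow hsymm hdiag htri k p) (V_nonempty k p)).1 hc
  have hopen : IsOpen ((G d q) ⁻¹' Iio c) :=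
    (G_cont hL hsymm htri hLip q).isOpen_preimage _ isOpen_Iio
  filter_upwards [hopen.mem_nhds hlt] with p' hp'
  exact lt_of_le_of_lt (csInf_le (V_bddBelow hsymm hdiag htri k p') ⟨q, hq, rfl⟩) hp'

lemma H_lsc (hL : 0 < L) (hsymm : ∀ a b, d a b = d b a)
    (htri : ∀ a b c, d a c ≤ d a b + d b c)
    (hLip : ∀ a b, d a b ≤ L * ‖a - b‖) (k : ℕ) :
    LowerSemicontinuous (fun p => sSup (V d k p)) := by
  intro p c hc
  obtain ⟨_, ⟨q, hq, rfl⟩, hlt⟩ :=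
    (lt_csSup_iff (V_bddAbove hLip k p) (V_nonempty k p)).1 hc
  have hopen : IsOpen ((G d q) ⁻¹' Ioi c) :=
    (G_cont hL hsymm htri hLip q).isOpen_preimage _ isOpen_Ioi
  filter_upwards [hopen.mem_nhds hlt] with p' hp'
  exact lt_of_lt_of_le hp' (le_csSup (V_bddAbove hLip k p') ⟨q, hq, rfl⟩)

lemma h_mono (hsymm : ∀ a b, d a b = d b a) (hdiag : ∀ a, d a a = 0)
    (htri : ∀ a b c, d a c ≤ d a b + d b c) (p) :
    Monotone (fun k => sInf (V d k p)) := by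
  intro k m hkm
  exact csInf_le_csInf (V_bddBelow hsymm hdiag htri k p) (V_nonempty m p)
    (image_mono (T_subset hkm))

lemma H_anti (hLip : ∀ a b, d a b ≤ L * ‖a - b‖) (p) :
    Antitone (fun k => sSup (V d k p)) := by
  intro k m hkm
  exact csSup_le_csSup (V_bddAbove hLip k p) (V_nonempty m p)
    (image_mono (T_subset hkm))

lemma h_le (hsymm : ∀ a b, d a b = d b a) (hdiag : ∀ a, d a a = 0)
    (htri : ∀ a b c, d a c ≤ d a b + d b c)
    (hLip : ∀ a b, d a b ≤ L * ‖a - b‖) (k : ℕ) (p) :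
    sInf (V d k p) ≤ L * ‖p.2‖ :=
  csInf_le_of_le (V_bddBelow hsymm hdiag htri k p)
    ⟨_, T_mem k, rfl⟩ (G_le hLip (kpos k) p)

lemma H_ge (hsymm : ∀ a b, d a b = d b a) (hdiag : ∀ a, d a a = 0)
    (htri : ∀ a b c, d a c ≤ d a b + d b c)
    (hLip : ∀ a b, d a b ≤ L * ‖a - b‖) (k : ℕ) (p) :
    0 ≤ sSup (V d k p) :=
  le_csSup_of_le (V_bddAbove hLip k p) ⟨_, T_mem k, rfl⟩
    (G_nonneg hsymm hdiag htri (kpos k) p)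
-- Facts about the inner function u t = sInf / sSup over the closed ball.
section Inner

variable (hsymm : ∀ a b, d a b = d b a) (hdiag : ∀ a, d a a = 0)
    (htri : ∀ a b c, d a c ≤ d a b + d b c)
    (hLip : ∀ a b, d a b ≤ L * ‖a - b‖)
    (p : EuclideanSpace ℝ (Fin n) × EuclideanSpace ℝ (Fin n))

lemma ball_img_nonempty {t : ℝ} (ht : 0 < t) :
    ((fun y => d y (y + t • p.2) / t) '' closedBall p.1 t).Nonempty :=
  ⟨_, p.1, mem_closedBall_self ht.le, rfl⟩

include hsymm hdiag htri in
lemma ball_img_bddBelow {t : ℝ} (ht : 0 < t) :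
    BddBelow ((fun y => d y (y + t • p.2) / t) '' closedBall p.1 t) := by
  refine ⟨0, ?_⟩
  rintro _ ⟨y, hy, rfl⟩
  exact div_nonneg (d_nonneg hsymm hdiag htri _ _) ht.le

include hLip in
lemma ball_val_le {t : ℝ} (ht : 0 < t) (y : EuclideanSpace ℝ (Fin n)) :
    d y (y + t • p.2) / t ≤ L * ‖p.2‖ := by
  rw [div_le_iff₀ ht]
  calc d y (y + t • p.2) ≤ L * ‖y - (y + t • p.2)‖ := hLip _ _
    _ = L * (t * ‖p.2‖) := by
        rw [show y - (y + t • p.2) = -(t • p.2) by abel, norm_neg, norm_smul,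
          Real.norm_eq_abs, abs_of_pos ht]
    _ = L * ‖p.2‖ * t := by ring

include hLip in
lemma ball_img_bddAbove {t : ℝ} (ht : 0 < t) :
    BddAbove ((fun y => d y (y + t • p.2) / t) '' closedBall p.1 t) := by
  refine ⟨L * ‖p.2‖, ?_⟩
  rintro _ ⟨y, hy, rfl⟩
  exact ball_val_le hLip p ht y

/-- Membership of shifted points in the closed ball. -/
lemma shift_mem {t : ℝ} {z : EuclideanSpace ℝ (Fin n)} (hz : ‖z‖ ≤ t) :
    p.1 + z ∈ closedBall p.1 t := by
  rw [mem_closedBall, dist_eq_norm, add_sub_cancel_left]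
  exact hz

/-- For `q ∈ T n k`, the value `G d q p` it is one of the ball values at `t = q.1`. -/
lemma G_mem_ball_img {k : ℕ} {q : ℝ × EuclideanSpace ℝ (Fin n)} (hq : q ∈ T n k) :
    G d q p ∈ (fun y => d y (y + q.1 • p.2) / q.1) '' closedBall p.1 q.1 :=
  ⟨p.1 + q.2, shift_mem p hq.2, rfl⟩

/-- Conversely each ball value at some `t ∈ Ioc 0 (1/(k+1))` lies in `V d k p`. -/
lemma ball_img_subset_V {k : ℕ} {t : ℝ} (ht : t ∈ Set.Ioc (0:ℝ) (1/(k+1))) :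
    (fun y => d y (y + t • p.2) / t) '' closedBall p.1 t ⊆ V d k p := by
  rintro _ ⟨y, hy, rfl⟩
  refine ⟨(t, y - p.1), ⟨ht, ?_⟩, ?_⟩
  · rw [mem_closedBall, dist_eq_norm] at hy; exact hy
  · simp [G]

end Inner

/-- The inner function of the lower derivate. -/
noncomputable def uLow (d : EuclideanSpace ℝ (Fin n) → EuclideanSpace ℝ (Fin n) → ℝ)
    (p : EuclideanSpace ℝ (Fin n) × EuclideanSpace ℝ (Fin n)) (t : ℝ) : ℝ :=
  sInf ((fun y => d y (y + t • p.2) / t) '' closedBall p.1 t)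

/-- The inner function of the upper derivate. -/
noncomputable def uUp (d : EuclideanSpace ℝ (Fin n) → EuclideanSpace ℝ (Fin n) → ℝ)
    (p : EuclideanSpace ℝ (Fin n) × EuclideanSpace ℝ (Fin n)) (t : ℝ) : ℝ :=
  sSup ((fun y => d y (y + t • p.2) / t) '' closedBall p.1 t)

section Key

variable (hsymm : ∀ a b, d a b = d b a) (hdiag : ∀ a, d a a = 0)
    (htri : ∀ a b c, d a c ≤ d a b + d b c)
    (hLip : ∀ a b, d a b ≤ L * ‖a - b‖)
    (p : EuclideanSpace ℝ (Fin n) × EuclideanSpace ℝ (Fin n))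

include hsymm hdiag htri hLip

lemma low_eq : lowerDerivate d p.1 p.2 = ⨆ k, sInf (V d k p) := by
  have key1 : ∀ k : ℕ, ∀ t ∈ Set.Ioc (0:ℝ) (1/(k+1)), sInf (V d k p) ≤ uLow d p t := by
    intro k t ht
    refine le_csInf (ball_img_nonempty p ht.1) fun b hb => ?_
    exact csInf_le (V_bddBelow hsymm hdiag htri k p) (ball_img_subset_V p ht hb)
  have key2 : ∀ k : ℕ, ∀ a : ℝ, (∀ t ∈ Set.Ioc (0:ℝ) (1/(k+1)), a ≤ uLow d p t) →
      a ≤ sInf (V d k p) := by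
    intro k a ha
    refine le_csInf (V_nonempty k p) ?_
    rintro b ⟨q, hq, rfl⟩
    exact (ha q.1 hq.1).trans
      (csInf_le (ball_img_bddBelow hsymm hdiag htri p hq.1.1) (G_mem_ball_img p hq))
  have hbddr : BddAbove (Set.range fun k => sInf (V d k p)) := by
    refine ⟨L * ‖p.2‖, ?_⟩
    rintro _ ⟨k, rfl⟩
    exact h_le hsymm hdiag htri hLip k p
  have hld : lowerDerivate d p.1 p.2 = Filter.liminf (uLow d p) (nhdsWithin (0:ℝ) (Set.Ioi 0)) := rfl
  rw [hld, Filter.liminf_eq]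
  apply le_antisymm
  · apply csSup_le
    · refine ⟨0, ?_⟩
      filter_upwards [self_mem_nhdsWithin] with t ht
      refine le_csInf (ball_img_nonempty p ht) ?_
      rintro _ ⟨y, hy, rfl⟩
      exact div_nonneg (d_nonneg hsymm hdiag htri _ _) (le_of_lt ht)
    · intro a ha
      replace ha : {t : ℝ | a ≤ uLow d p t} ∈ nhdsWithin (0:ℝ) (Set.Ioi 0) := ha
      obtain ⟨ε, hε, hsub⟩ := mem_nhdsGT_iff_exists_Ioc_subset.1 ha
      have hε0 : (0:ℝ) < ε := hε
      obtain ⟨k, hk⟩ := exists_nat_gt (1/ε)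
      have hkε : 1/((k:ℕ)+1:ℝ) ≤ ε := by
        rw [div_le_iff₀ (by positivity)]
        rw [div_lt_iff₀ hε0] at hk
        nlinarith
      refine le_trans (key2 k a fun t ht => ?_) (le_ciSup hbddr k)
      exact hsub ⟨ht.1, ht.2.trans hkε⟩
  · apply ciSup_le
    intro k
    apply le_csSup
    · refine ⟨L * ‖p.2‖, fun a ha => ?_⟩
      replace ha : ∀ᶠ t in nhdsWithin (0:ℝ) (Set.Ioi 0), a ≤ uLow d p t := ha
      obtain ⟨t, hat, ht⟩ := (ha.and self_mem_nhdsWithin).exists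
      exact hat.trans (csInf_le_of_le (ball_img_bddBelow hsymm hdiag htri p ht)
        ⟨p.1, mem_closedBall_self (le_of_lt ht), rfl⟩ (ball_val_le hLip p ht p.1))
    · filter_upwards [Ioc_mem_nhdsGT (kpos k)] with t ht
      exact key1 k t ht

lemma up_eq : upperDerivate d p.1 p.2 = ⨅ k, sSup (V d k p) := by
  have key1 : ∀ k : ℕ, ∀ t ∈ Set.Ioc (0:ℝ) (1/(k+1)), uUp d p t ≤ sSup (V d k p) := by
    intro k t ht
    refine csSup_le (ball_img_nonempty p ht.1) fun b hb => ?_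
    exact le_csSup (V_bddAbove hLip k p) (ball_img_subset_V p ht hb)
  have key2 : ∀ k : ℕ, ∀ a : ℝ, (∀ t ∈ Set.Ioc (0:ℝ) (1/(k+1)), uUp d p t ≤ a) →
      sSup (V d k p) ≤ a := by
    intro k a ha
    refine csSup_le (V_nonempty k p) ?_
    rintro b ⟨q, hq, rfl⟩
    exact le_trans
      (le_csSup (ball_img_bddAbove hLip p hq.1.1) (G_mem_ball_img p hq)) (ha q.1 hq.1)
  have hbddr : BddBelow (Set.range fun k => sSup (V d k p)) := by
    refine ⟨0, ?_⟩
    rintro _ ⟨k, rfl⟩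
    exact H_ge hsymm hdiag htri hLip k p
  have hud : upperDerivate d p.1 p.2 = Filter.limsup (uUp d p) (nhdsWithin (0:ℝ) (Set.Ioi 0)) := rfl
  rw [hud, Filter.limsup_eq]
  apply le_antisymm
  · apply le_ciInf
    intro k
    apply csInf_le
    · refine ⟨0, fun a ha => ?_⟩
      replace ha : ∀ᶠ t in nhdsWithin (0:ℝ) (Set.Ioi 0), uUp d p t ≤ a := ha
      obtain ⟨t, hat, ht⟩ := (ha.and self_mem_nhdsWithin).exists
      refine le_trans (le_csSup_of_le (ball_img_bddAbove hLip p ht)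
        ⟨p.1, mem_closedBall_self (le_of_lt ht), rfl⟩
        (div_nonneg (d_nonneg hsymm hdiag htri _ _) (le_of_lt ht))) hat
    · filter_upwards [Ioc_mem_nhdsGT (kpos k)] with t ht
      exact key1 k t ht
  · apply le_csInf
    · refine ⟨L * ‖p.2‖, ?_⟩
      filter_upwards [self_mem_nhdsWithin] with t ht
      refine csSup_le (ball_img_nonempty p ht) ?_
      rintro _ ⟨y, hy, rfl⟩
      exact ball_val_le hLip p ht y
    · intro a ha
      replace ha : {t : ℝ | uUp d p t ≤ a} ∈ nhdsWithin (0:ℝ) (Set.Ioi 0) := ha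
      obtain ⟨ε, hε, hsub⟩ := mem_nhdsGT_iff_exists_Ioc_subset.1 ha
      have hε0 : (0:ℝ) < ε := hε
      obtain ⟨k, hk⟩ := exists_nat_gt (1/ε)
      have hkε : 1/((k:ℕ)+1:ℝ) ≤ ε := by
        rw [div_le_iff₀ (by positivity)]
        rw [div_lt_iff₀ hε0] at hk
        nlinarith
      refine le_trans (ciInf_le hbddr k) (key2 k a fun t ht => ?_)
      exact hsub ⟨ht.1, ht.2.trans hkε⟩

end Key

end DerivAux

/-- For a pseudometric `d` on `ℝⁿ` that is `L`-Lipschitz with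
respect to the Euclidean distance, the lower and upper derivates
`ρ̲, ρ̄ : ℝⁿ × ℝⁿ → ℝ` are Borel measurable functions. -/
theorem derivates_measurable
    {n : ℕ} (L : ℝ) (hL : 0 < L)
    (d : EuclideanSpace ℝ (Fin n) → EuclideanSpace ℝ (Fin n) → ℝ)
    (hsymm : ∀ a b, d a b = d b a)
    (hdiag : ∀ a, d a a = 0)
    (htri : ∀ a b c, d a c ≤ d a b + d b c)
    (hLip : ∀ a b, d a b ≤ L * ‖a - b‖) :
    Measurable (fun p : EuclideanSpace ℝ (Fin n) × EuclideanSpace ℝ (Fin n) =>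
        lowerDerivate d p.1 p.2) ∧
      Measurable (fun p : EuclideanSpace ℝ (Fin n) × EuclideanSpace ℝ (Fin n) =>
        upperDerivate d p.1 p.2) := by
  classical
  constructor
  · have heq : (fun p : EuclideanSpace ℝ (Fin n) × EuclideanSpace ℝ (Fin n) =>
        lowerDerivate d p.1 p.2) = fun p => ⨆ k, sInf (DerivAux.V d k p) :=
      funext fun p => DerivAux.low_eq hsymm hdiag htri hLip p
    rw [heq]
    refine measurable_of_tendsto_metrizable' atTop
      (fun k => (DerivAux.h_usc hL hsymm hdiag htri hLip k).measurable) ?_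
    rw [tendsto_pi_nhds]
    intro p
    refine tendsto_atTop_ciSup (DerivAux.h_mono hsymm hdiag htri p) ⟨L * ‖p.2‖, ?_⟩
    rintro _ ⟨k, rfl⟩
    exact DerivAux.h_le hsymm hdiag htri hLip k p
  · have heq : (fun p : EuclideanSpace ℝ (Fin n) × EuclideanSpace ℝ (Fin n) =>
        upperDerivate d p.1 p.2) = fun p => ⨅ k, sSup (DerivAux.V d k p) :=
      funext fun p => DerivAux.up_eq hsymm hdiag htri hLip p
    rw [heq]
    refine measurable_of_tendsto_metrizable' atTop
      (fun k => (DerivAux.H_lsc hL hsymm htri hLip k).measurable) ?_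
    rw [tendsto_pi_nhds]
    intro p
    refine tendsto_atTop_ciInf (DerivAux.H_anti hLip p) ⟨0, ?_⟩
    rintro _ ⟨k, rfl⟩
    exact DerivAux.H_ge hsymm hdiag htri hLip k p
end

section
/- Let (X, d_X) be a metric space, L ≥ 1, and f : ℝ³ → X an L-biLipschitz map with respect to ρ, i.e. (1/L)·ρ(a, b) ≤ d_X(f(a), f(b)) ≤ L·ρ(a, b) for all a, b ∈ ℝ³. Define γ₁(t) = f(t, 0, 0) and γ₂(t) = f((0, 1, 0)·(t, 0, 0)) = f(t, 1, −t/2). Then there exist constants 0 < C₁ ≤ C₂ and exponents 0 < α ≤ β < 1 (one may take α = β = 1/2) such that C₁·|t|^α ≤ d_X(γ₁(t), γ₂(t)) ≤ C₂·|t|^β for all |t| ≥ 1. -/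
/-- The Heisenberg group product on `ℝ³`. -/
noncomputable def Hmul (a b : ℝ × ℝ × ℝ) : ℝ × ℝ × ℝ :=
  (a.1 + b.1, a.2.1 + b.2.1, a.2.2 + b.2.2 + (a.1 * b.2.1 - a.2.1 * b.1) / 2)

/-- The Heisenberg dilations on `ℝ³`. -/
noncomputable def Hdil (t : ℝ) (a : ℝ × ℝ × ℝ) : ℝ × ℝ × ℝ :=
  (t * a.1, t * a.2.1, t ^ 2 * a.2.2)

/-- If `f : ℝ³ → X` is `L`-biLipschitz with respect to a
left-invariant, homogeneous, continuous metric `ρ` on the Heisenberg group,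
then the images `γ₁(t) = f(t,0,0)` and `γ₂(t) = f(t,1,−t/2)` of the horizontal
line and its left translate by `(0,1,0)` satisfy
`C₁·|t|^α ≤ d_X(γ₁(t), γ₂(t)) ≤ C₂·|t|^β` for all `|t| ≥ 1`, with constants
`0 < C₁ ≤ C₂` and exponents `0 < α ≤ β < 1`. -/
theorem heisenberg_biLipschitz_image_spread
    (ρ : ℝ × ℝ × ℝ → ℝ × ℝ × ℝ → ℝ)
    (hsymm : ∀ a b, ρ a b = ρ b a)
    (hzero : ∀ a, ρ a a = 0)
    (htri : ∀ a b c, ρ a c ≤ ρ a b + ρ b c)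
    (hpos : ∀ a b, a ≠ b → 0 < ρ a b)
    (hleft : ∀ g a b, ρ (Hmul g a) (Hmul g b) = ρ a b)
    (hhom : ∀ t : ℝ, 0 < t → ∀ a b, ρ (Hdil t a) (Hdil t b) = t * ρ a b)
    (hcont : Continuous (fun p : (ℝ × ℝ × ℝ) × (ℝ × ℝ × ℝ) => ρ p.1 p.2))
    {X : Type*} [MetricSpace X] (L : ℝ) (hL : 1 ≤ L) (f : ℝ × ℝ × ℝ → X)
    (hf : ∀ a b, (1 / L) * ρ a b ≤ dist (f a) (f b) ∧ dist (f a) (f b) ≤ L * ρ a b) :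
    ∃ C₁ C₂ α β : ℝ, 0 < C₁ ∧ C₁ ≤ C₂ ∧ 0 < α ∧ α ≤ β ∧ β < 1 ∧
      ∀ t : ℝ, 1 ≤ |t| →
        C₁ * |t| ^ α ≤ dist (f (t, 0, 0)) (f (Hmul (0, 1, 0) (t, 0, 0))) ∧
          dist (f (t, 0, 0)) (f (Hmul (0, 1, 0) (t, 0, 0))) ≤ C₂ * |t| ^ β := by
  classical
  have hL0 : (0:ℝ) < L := lt_of_lt_of_le one_pos hL
  set K : Set (ℝ × ℝ) := (Set.Icc (0:ℝ) 1) ×ˢ ({-1, 1} : Set ℝ) with hK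
  have hKc : IsCompact K := isCompact_Icc.prod (Set.Finite.isCompact (by simp))
  have hKne : ((1:ℝ), (1:ℝ)) ∈ K := by constructor <;> simp
  set φ : ℝ × ℝ → ℝ := fun p => ρ (0, 0, 0) (0, p.1, p.2) with hφ
  have hφc : Continuous φ := by
    have : Continuous (fun p : ℝ × ℝ => ((((0:ℝ),(0:ℝ),(0:ℝ)), ((0:ℝ), p.1, p.2)) : (ℝ×ℝ×ℝ)×(ℝ×ℝ×ℝ))) := by fun_prop
    exact hcont.comp this
  obtain ⟨pm, hpmK, hmin'⟩ := hKc.exists_isMinOn ⟨_, hKne⟩ hφc.continuousOn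
  obtain ⟨pM, hpMK, hmax'⟩ := hKc.exists_isMaxOn ⟨_, hKne⟩ hφc.continuousOn
  have hmin : ∀ p ∈ K, φ pm ≤ φ p := fun p hp => hmin' hp
  have hmax : ∀ p ∈ K, φ p ≤ φ pM := fun p hp => hmax' hp
  set m := φ pm with hmdef
  set M := φ pM with hMdef
  have hm0 : 0 < m := by
    apply hpos
    intro h
    have h2 : pm.2 = 0 := by
      have := congrArg (fun p : ℝ × ℝ × ℝ => p.2.2) h
      simpa using this.symm
    rcases hpmK.2 with h' | h' <;> rw [h'] at h2 <;> norm_num at h2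
  have hmM : m ≤ M := hmin pM hpMK
  refine ⟨m / L, L * M, 1/2, 1/2, div_pos hm0 hL0, ?_, by norm_num, le_refl _, by norm_num, ?_⟩
  · have : M ≤ L * M := by nlinarith
    calc m / L ≤ m := by
          rw [div_le_iff₀ hL0]; nlinarith
      _ ≤ M := hmM
      _ ≤ L * M := this
  intro t ht
  have ht0 : (0:ℝ) < |t| := lt_of_lt_of_le one_pos ht
  set s := Real.sqrt |t| with hs
  have hs1 : 1 ≤ s := by
    rw [hs, show (1:ℝ) = Real.sqrt 1 by simp]
    exact Real.sqrt_le_sqrt ht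
  have hs0 : 0 < s := lt_of_lt_of_le one_pos hs1
  have hsq : s ^ 2 = |t| := Real.sq_sqrt (abs_nonneg t)
  have hmem : ((1/s, -t/|t|) : ℝ × ℝ) ∈ K := by
    constructor
    · constructor
      · positivity
      · rw [div_le_one hs0]; exact hs1
    · rcases abs_cases t with ⟨h1, h1'⟩ | ⟨h1, h1'⟩
      · have htne : t ≠ 0 := by intro h; rw [h, abs_zero] at ht0; exact lt_irrefl _ ht0
        left; rw [h1]; field_simp
      · have htne : t ≠ 0 := ne_of_lt h1'
        right; rw [h1]; field_simp; exact Set.mem_singleton _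
  have key : ρ (t, 0, 0) (Hmul (0, 1, 0) (t, 0, 0)) = s * φ (1/s, -t/|t|) := by
    have h1 : ρ (t, 0, 0) (Hmul (0, 1, 0) (t, 0, 0)) = ρ (0, 0, 0) (0, 1, -t) := by
      rw [← hleft (-t, 0, 0)]
      congr 1 <;> simp [Hmul] <;> ring
    have h2 : ρ ((0:ℝ), (0:ℝ), (0:ℝ)) (0, 1, -t) = s * φ (1/s, -t/|t|) := by
      rw [hφ]
      rw [← hhom s hs0 (0,0,0) (0, 1/s, -t/|t|)]
      congr 1
      · simp [Hdil]
      · simp only [Hdil]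
        refine Prod.ext (by simp) (Prod.ext ?_ ?_)
        · simp; field_simp
        · simp only []
          rw [hsq]
          field_simp
    rw [h1, h2]
  have hφlo : m ≤ φ (1/s, -t/|t|) := hmin _ hmem
  have hφhi : φ (1/s, -t/|t|) ≤ M := hmax _ hmem
  have hpow : |t| ^ ((1:ℝ)/2) = s := by
    rw [hs, Real.sqrt_eq_rpow]
  obtain ⟨hlo, hhi⟩ := hf (t, 0, 0) (Hmul (0, 1, 0) (t, 0, 0))
  rw [key] at hlo hhi
  constructor
  · rw [hpow]
    calc m / L * s = 1 / L * (s * m) := by ring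
      _ ≤ 1 / L * (s * φ (1/s, -t/|t|)) := by
          apply mul_le_mul_of_nonneg_left _ (by positivity)
          exact mul_le_mul_of_nonneg_left hφlo (le_of_lt hs0)
      _ ≤ _ := hlo
  · rw [hpow]
    calc dist (f (t, 0, 0)) (f (Hmul (0, 1, 0) (t, 0, 0)))
        ≤ L * (s * φ (1/s, -t/|t|)) := hhi
      _ ≤ L * M * s := by
          have : s * φ (1/s, -t/|t|) ≤ s * M := mul_le_mul_of_nonneg_left hφhi (le_of_lt hs0)
          nlinarith
end

section
/- Let (X, d_X) be a metric space with the property that for any two geodesic lines γ, σ : ℝ → X the function t ↦ d_X(γ(t), σ(t)) is convex on ℝ (this holds in any CAT₀ space). Then there is no map f : ℝ³ → X which is biLipschitz with respect to ρ (i.e. (1/L)·ρ(a, b) ≤ d_X(f(a), f(b)) ≤ L·ρ(a, b) for some L ≥ 1 and all a, b) and such that both curves t ↦ f(t, 0, 0) and t ↦ f((0, 1, 0)·(t, 0, 0)) are geodesic lines in X. -/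
/-- A geodesic line in a metric space: a curve `γ : ℝ → X` such that
`d(γ(s), γ(t)) = c·|s − t|` for some constant `c > 0`. -/
def IsGeodesicLine {X : Type*} [MetricSpace X] (γ : ℝ → X) : Prop :=
  ∃ c : ℝ, 0 < c ∧ ∀ s t : ℝ, dist (γ s) (γ t) = c * |s - t|

/-- Let `X` be a metric space in which the distance between any
two geodesic lines is a convex function of the parameter (as in a CAT(0)
space).  Then there is no map `f : ℝ³ → X` that is biLipschitz with respect to
a left-invariant, homogeneous, continuous metric `ρ` on the Heisenberg group
and sends both `t ↦ (t,0,0)` and `t ↦ (0,1,0)·(t,0,0)` to geodesic lines. -/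
theorem no_biLipschitz_heisenberg_into_convex_distance_space
    (ρ : ℝ × ℝ × ℝ → ℝ × ℝ × ℝ → ℝ)
    (hsymm : ∀ a b, ρ a b = ρ b a)
    (hzero : ∀ a, ρ a a = 0)
    (htri : ∀ a b c, ρ a c ≤ ρ a b + ρ b c)
    (hpos : ∀ a b, a ≠ b → 0 < ρ a b)
    (hleft : ∀ g a b, ρ (Hmul g a) (Hmul g b) = ρ a b)
    (hhom : ∀ t : ℝ, 0 < t → ∀ a b, ρ (Hdil t a) (Hdil t b) = t * ρ a b)
    (hcont : Continuous (fun p : (ℝ × ℝ × ℝ) × (ℝ × ℝ × ℝ) => ρ p.1 p.2))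
    {X : Type*} [MetricSpace X]
    (hconv : ∀ γ σ : ℝ → X, IsGeodesicLine γ → IsGeodesicLine σ →
      ConvexOn ℝ Set.univ (fun t => dist (γ t) (σ t))) :
    ¬ ∃ (L : ℝ) (f : ℝ × ℝ × ℝ → X), 1 ≤ L ∧
        (∀ a b, (1 / L) * ρ a b ≤ dist (f a) (f b) ∧ dist (f a) (f b) ≤ L * ρ a b) ∧
        IsGeodesicLine (fun t : ℝ => f (t, 0, 0)) ∧
        IsGeodesicLine (fun t : ℝ => f (Hmul (0, 1, 0) (t, 0, 0))) := by
  rintro ⟨L, f, hL, hbil, hγ, hσ⟩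
  have hL0 : (0:ℝ) < L := lt_of_lt_of_le one_pos hL
  set D : ℝ → ℝ := fun t => dist (f (t,0,0)) (f (Hmul (0,1,0) (t,0,0))) with hDdef
  have hcv : ConvexOn ℝ Set.univ D := hconv _ _ hγ hσ
  set c1 : ℝ := ρ (0,0,0) (0,1,0) with hc1
  set c2 : ℝ := ρ (0,0,0) (0,0,-1) with hc2
  have hc1p : 0 < c1 := hpos _ _ (by norm_num [Prod.ext_iff])
  have hc2p : 0 < c2 := hpos _ _ (by norm_num [Prod.ext_iff])
  -- the distance ρ between the two curves at time t equals ρ(0, (0,1,-t))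
  have key1 : ∀ t : ℝ, ρ (t,0,0) (Hmul (0,1,0) (t,0,0)) = ρ (0,0,0) ((0,1,-t) : ℝ×ℝ×ℝ) := by
    intro t
    have e1 : Hmul (-t,0,0) (t,0,0) = ((0,0,0) : ℝ×ℝ×ℝ) := by
      simp [Hmul, Prod.ext_iff]
    have e2 : Hmul (-t,0,0) (Hmul (0,1,0) (t,0,0)) = ((0,1,-t) : ℝ×ℝ×ℝ) := by
      simp [Hmul, Prod.ext_iff]
    rw [← hleft (-t,0,0), e1, e2]
  -- homogeneity: ρ(0,(0,0,-t)) = √t · c2 for t > 0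
  have keyh : ∀ t : ℝ, 0 < t → ρ (0,0,0) ((0,0,-t) : ℝ×ℝ×ℝ) = Real.sqrt t * c2 := by
    intro t ht
    have h1 := hhom (Real.sqrt t) (Real.sqrt_pos.mpr ht) (0,0,0) (0,0,-1)
    have e1 : Hdil (Real.sqrt t) (0,0,0) = ((0,0,0) : ℝ×ℝ×ℝ) := by
      simp [Hdil]
    have e2 : Hdil (Real.sqrt t) (0,0,-1) = ((0,0,-t) : ℝ×ℝ×ℝ) := by
      simp [Hdil, Prod.ext_iff, Real.sq_sqrt ht.le]
    rw [e1, e2] at h1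
    rw [h1]
  -- ρ((0,1,0),(0,1,-t)) = ρ(0,(0,0,-t))
  have key2 : ∀ t : ℝ, ρ ((0,1,0) : ℝ×ℝ×ℝ) (0,1,-t) = ρ (0,0,0) ((0,0,-t) : ℝ×ℝ×ℝ) := by
    intro t
    have e1 : Hmul (0,-1,0) (0,1,0) = ((0,0,0) : ℝ×ℝ×ℝ) := by
      simp [Hmul, Prod.ext_iff]
    have e2 : Hmul (0,-1,0) (0,1,-t) = ((0,0,-t) : ℝ×ℝ×ℝ) := by
      simp [Hmul, Prod.ext_iff]
    rw [← hleft (0,-1,0), e1, e2]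
  -- ρ((0,1,-t),(0,0,-t)) = c1
  have key3 : ∀ t : ℝ, ρ ((0,1,-t) : ℝ×ℝ×ℝ) (0,0,-t) = c1 := by
    intro t
    have e1 : Hmul (0,-1,t) (0,1,-t) = ((0,0,0) : ℝ×ℝ×ℝ) := by
      simp [Hmul, Prod.ext_iff]
    have e2 : Hmul (0,-1,t) (0,0,-t) = ((0,-1,0) : ℝ×ℝ×ℝ) := by
      simp [Hmul, Prod.ext_iff]
    have h1 : ρ ((0,1,-t) : ℝ×ℝ×ℝ) (0,0,-t) = ρ ((0,0,0) : ℝ×ℝ×ℝ) (0,-1,0) := by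
      rw [← hleft (0,-1,t), e1, e2]
    have e3 : Hmul (0,1,0) (0,-1,0) = ((0,0,0) : ℝ×ℝ×ℝ) := by
      simp [Hmul, Prod.ext_iff]
    have e4 : Hmul (0,1,0) (0,0,0) = ((0,1,0) : ℝ×ℝ×ℝ) := by
      simp [Hmul, Prod.ext_iff]
    have h2 := hleft (0,1,0) (0,-1,0) (0,0,0)
    rw [e3, e4] at h2
    rw [h1, hsymm, ← h2]
  -- bounds on u t := ρ(0,(0,1,-t)) for t > 0
  have uub : ∀ t : ℝ, 0 < t → ρ (0,0,0) ((0,1,-t) : ℝ×ℝ×ℝ) ≤ c1 + Real.sqrt t * c2 := by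
    intro t ht
    calc ρ (0,0,0) ((0,1,-t) : ℝ×ℝ×ℝ)
        ≤ ρ (0,0,0) ((0,1,0):ℝ×ℝ×ℝ) + ρ ((0,1,0):ℝ×ℝ×ℝ) (0,1,-t) := htri _ _ _
      _ = c1 + Real.sqrt t * c2 := by rw [key2, keyh t ht]
  have ulb : ∀ t : ℝ, 0 < t → Real.sqrt t * c2 - c1 ≤ ρ (0,0,0) ((0,1,-t) : ℝ×ℝ×ℝ) := by
    intro t ht
    have := htri ((0,0,0) : ℝ×ℝ×ℝ) (0,1,-t) (0,0,-t)
    rw [keyh t ht, key3 t] at this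
    linarith
  -- biLipschitz bounds relate D to u
  have Dlb : ∀ t : ℝ, (1/L) * ρ (0,0,0) ((0,1,-t) : ℝ×ℝ×ℝ) ≤ D t := by
    intro t
    have := (hbil (t,0,0) (Hmul (0,1,0) (t,0,0))).1
    rwa [key1 t] at this
  have Dub : ∀ t : ℝ, D t ≤ L * ρ (0,0,0) ((0,1,-t) : ℝ×ℝ×ℝ) := by
    intro t
    have := (hbil (t,0,0) (Hmul (0,1,0) (t,0,0))).2
    rwa [key1 t] at this
  have hD0 : 0 ≤ D 0 := dist_nonneg
  -- the key inequality from convexity: for t ≥ 1, c2 √t is bounded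
  set K : ℝ := D 0 + L * c1 + L * c2 with hKdef
  have hKb : ∀ t : ℝ, 1 ≤ t → c2 * Real.sqrt t ≤ c1 + L * K := by
    intro t ht
    have ht0 : 0 < t := lt_of_lt_of_le one_pos ht
    have hT0 : 0 < t^2 := by positivity
    -- convexity at 0 and T = t^2 with weights 1 - 1/t, 1/t
    have ha : (0:ℝ) ≤ 1 - 1/t := by
      rw [sub_nonneg]
      exact div_le_one_of_le₀ ht ht0.le
    have hb : (0:ℝ) ≤ 1/t := by positivity
    have hab : (1 - 1/t) + 1/t = (1:ℝ) := by ring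
    have hconv2 := hcv.2 (Set.mem_univ (0:ℝ)) (Set.mem_univ (t^2)) ha hb hab
    have harg : (1 - 1/t) • (0:ℝ) + (1/t) • (t^2) = t := by
      field_simp
      rw [smul_eq_mul, smul_eq_mul, mul_zero, zero_add, one_div, pow_two, ← mul_assoc, inv_mul_cancel₀ ht0.ne', one_mul]
    rw [harg] at hconv2
    simp only [smul_eq_mul] at hconv2
    have hDT : D (t^2) ≤ L * (c1 + t * c2) := by
      have h1 := Dub (t^2)
      have h2 := uub (t^2) hT0
      have h3 : Real.sqrt (t^2) = t := Real.sqrt_sq ht0.le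
      rw [h3] at h2
      calc D (t^2) ≤ L * ρ (0,0,0) ((0,1,-(t^2)) : ℝ×ℝ×ℝ) := h1
        _ ≤ L * (c1 + t * c2) := by nlinarith
    have hDt : Real.sqrt t * c2 - c1 ≤ L * D t := by
      have h1 := Dlb t
      have h2 := ulb t ht0
      have h3 : ρ (0,0,0) ((0,1,-t) : ℝ×ℝ×ℝ) ≤ L * D t := by
        rw [div_mul_eq_mul_div, div_le_iff₀ hL0] at h1
        nlinarith [h1]
      linarith
    -- combine
    have hDconv : D t ≤ D 0 + (1/t) * (L * (c1 + t * c2)) := by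
      have h1 : (1 - 1/t) * D 0 ≤ D 0 := by
        nlinarith [div_pos one_pos ht0]
      calc D t ≤ (1 - 1/t) * D 0 + (1/t) * D (t^2) := hconv2
        _ ≤ D 0 + (1/t) * (L * (c1 + t * c2)) := by
            have := mul_le_mul_of_nonneg_left hDT (le_of_lt (div_pos one_pos ht0))
            linarith
    have h1t : 1/t ≤ 1 := div_le_one_of_le₀ ht ht0.le
    have h1t0 : 0 < 1/t := div_pos one_pos ht0
    have hfin : D t ≤ K := by
      have : (1/t) * (L * (c1 + t * c2)) = (1/t) * L * c1 + L * c2 := by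
        field_simp
      rw [this] at hDconv
      have : (1/t) * L * c1 ≤ L * c1 := by
        nlinarith [mul_nonneg (mul_nonneg (sub_nonneg.mpr h1t) hL0.le) hc1p.le]
      rw [hKdef]; linarith
    have := hDt
    nlinarith [hfin, hL0]
  -- now get the contradiction by taking t large
  have hKpos : 0 < K := by rw [hKdef]; nlinarith
  set s : ℝ := (c1 + L * K) / c2 + 1 with hs
  have hs1 : 1 ≤ s := by
    have h : 0 ≤ (c1 + L * K) / c2 := by positivity
    rw [hs]; linarith
  have hts : Real.sqrt (s^2) = s := Real.sqrt_sq (by linarith)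
  have hfinal := hKb (s^2) (by nlinarith)
  rw [hts] at hfinal
  have : c2 * s = c1 + L * K + c2 := by
    rw [hs]; field_simp
  rw [this] at hfinal
  linarith
end
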